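/- If −√(g h_r) ≤ v_r < 2√(g h_r), then the point h⁻ := (2√(g h_r) − v_r)²/(9g) satisfies 0 < h⁻ ≤ h_r, the value of the discharge-form inverse Lax curve there lies on the lower critical curve, φ̃_r(h⁻) = −h⁻·√(g h⁻), and h⁻ is the unique global minimum point of φ̃_r on (0,∞): φ̃_r(h) > φ̃_r(h⁻) for every h > 0 with h ≠ h⁻. -/
import Mathlib


/-- Inverse Lax curve through the right state `(hr, vr)`. -/
noncomputable def phir (g hr vr h : ℝ) : ℝ :=
  if h ≤ hr then vr - 2 * Real.sqrt (g * hr) + 2 * Real.sqrt (g * h)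
  else vr + (h - hr) * Real.sqrt (g * (h + hr) / (2 * h * hr))

/-- Discharge-form inverse Lax curve through the right state. -/
noncomputable def phirTilde (g hr vr h : ℝ) : ℝ := h * phir g hr vr h

/-- Cubic positivity: `t²(2t−c) + c³/27 = (t−c/3)²(2t+c/3) > 0` for `t>0`, `t≠c/3`. -/
lemma cubic_aux (c t : ℝ) (hc : 0 < c) (ht : 0 < t) (hne : t ≠ c / 3) :
    0 < t ^ 2 * (2 * t - c) + c ^ 3 / 27 := by
  have h1 : t ^ 2 * (2 * t - c) + c ^ 3 / 27 = (t - c / 3) ^ 2 * (2 * t + c / 3) := by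
    ring
  rw [h1]
  have h2 : 0 < (t - c / 3) ^ 2 := by
    have := sub_ne_zero.mpr hne
    positivity
  exact mul_pos h2 (by linarith)

/-- If `−√(g h_r) ≤ v_r < 2√(g h_r)`, then `h⁻ = (2√(g h_r) − v_r)²/(9g)` lies in
`(0, h_r]`, the discharge-form inverse Lax curve meets the lower critical curve
there, and `h⁻` is the unique global minimum point of `φ̃_r` on `(0, ∞)`. -/
theorem phirTilde_min_at_critical (g hr vr : ℝ) (hg : 0 < g) (hhr : 0 < hr)
    (hv₁ : -Real.sqrt (g * hr) ≤ vr) (hv₂ : vr < 2 * Real.sqrt (g * hr)) :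
    0 < (2 * Real.sqrt (g * hr) - vr) ^ 2 / (9 * g) ∧
    (2 * Real.sqrt (g * hr) - vr) ^ 2 / (9 * g) ≤ hr ∧
    phirTilde g hr vr ((2 * Real.sqrt (g * hr) - vr) ^ 2 / (9 * g)) =
      -(((2 * Real.sqrt (g * hr) - vr) ^ 2 / (9 * g)) *
        Real.sqrt (g * ((2 * Real.sqrt (g * hr) - vr) ^ 2 / (9 * g)))) ∧
    ∀ h : ℝ, 0 < h → h ≠ (2 * Real.sqrt (g * hr) - vr) ^ 2 / (9 * g) →
      phirTilde g hr vr h >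
        phirTilde g hr vr ((2 * Real.sqrt (g * hr) - vr) ^ 2 / (9 * g)) := by
  have hghr : (0:ℝ) < g * hr := by positivity
  set s := Real.sqrt (g * hr) with hs_def
  have hs_pos : 0 < s := Real.sqrt_pos.mpr hghr
  have hs2 : s ^ 2 = g * hr := Real.sq_sqrt hghr.le
  set c := 2 * s - vr with hc_def
  have hc_pos : 0 < c := by rw [hc_def]; linarith
  have hc_le : c ≤ 3 * s := by rw [hc_def]; linarith
  set hm := c ^ 2 / (9 * g) with hm_def
  have hm_pos : 0 < hm := by rw [hm_def]; positivity
  clear_value s c hm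
  have hm_le : hm ≤ hr := by
    rw [hm_def, div_le_iff₀ (by positivity)]
    have hcc : c * c ≤ (3 * s) * (3 * s) :=
      mul_le_mul hc_le hc_le hc_pos.le (by positivity)
    nlinarith [hs2, hcc]
  have hgm : g * hm = (c / 3) ^ 2 := by
    rw [hm_def]; field_simp; ring
  have hsm : Real.sqrt (g * hm) = c / 3 := by
    rw [hgm, Real.sqrt_sq (by positivity)]
  have hphir_m : phir g hr vr hm = -(c / 3) := by
    unfold phir
    rw [if_pos hm_le, ← hs_def, hsm, hc_def]
    ring
  have hval : phirTilde g hr vr hm = -(hm * (c / 3)) := by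
    unfold phirTilde; rw [hphir_m]; ring
  refine ⟨hm_pos, hm_le, ?_, ?_⟩
  · rw [hval, hsm]
  · intro h hh hne
    rw [hval]
    set t := Real.sqrt (g * h) with ht_def
    have ht2 : t ^ 2 = g * h := Real.sq_sqrt (by positivity)
    have ht_pos : 0 < t := Real.sqrt_pos.mpr (by positivity)
    clear_value t
    -- common step: from t ≠ c/3 deduce h*(2t−c) > −(hm*(c/3))
    have main : t ≠ c / 3 → -(hm * (c / 3)) < h * (2 * t - c) := by
      intro htne
      have cub := cubic_aux c t hc_pos ht_pos htne
      have lin : g * (h * (2 * t - c) + hm * (c / 3)) =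
          t ^ 2 * (2 * t - c) + c ^ 3 / 27 := by
        have h1 : g * h = t ^ 2 := ht2.symm
        have h2 : g * hm = (c / 3) ^ 2 := hgm
        linear_combination (2 * t - c) * h1 + (c / 3) * h2
      have hpos : 0 < g * (h * (2 * t - c) + hm * (c / 3)) := by rw [lin]; exact cub
      nlinarith [hpos, hg]
    by_cases hle : h ≤ hr
    · -- rarefaction part
      have htne : t ≠ c / 3 := by
        intro heq
        apply hne
        have hgh : g * h = c ^ 2 / 9 := by rw [← ht2, heq]; ring
        rw [hm_def]
        field_simp
        linear_combination 9 * hgh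
      have hphir : phir g hr vr h = 2 * t - c := by
        unfold phir
        rw [if_pos hle, ← hs_def, ← ht_def, hc_def]
        ring
      unfold phirTilde
      rw [hphir]
      exact main htne
    · -- shock part
      push_neg at hle
      have hts : s < t := by
        rw [hs_def, ht_def]
        exact Real.sqrt_lt_sqrt hghr.le (by nlinarith)
      have htne : t ≠ c / 3 := by
        intro heq; rw [heq] at hts; linarith
      set r := Real.sqrt (g * (h + hr) / (2 * h * hr)) with hr_def
      have hr_nonneg : 0 ≤ r := Real.sqrt_nonneg _
      have hr2 : r ^ 2 = g * (h + hr) / (2 * h * hr) := Real.sq_sqrt (by positivity)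
      set u := Real.sqrt (h * hr) with hu_def
      have hu2 : u ^ 2 = h * hr := Real.sq_sqrt (by positivity)
      have hu_pos : 0 < u := Real.sqrt_pos.mpr (by positivity)
      clear_value r u
      have hts_mul : t * s = g * u := by
        rw [ht_def, hs_def, hu_def, ← Real.sqrt_mul (by positivity),
          show g * h * (g * hr) = g ^ 2 * (h * hr) by ring,
          Real.sqrt_mul (by positivity), Real.sqrt_sq hg.le]
      have hsq : (2 * t - 2 * s) ^ 2 ≤ ((h - hr) * r) ^ 2 := by
        have e1 : ((h - hr) * r) ^ 2 = (h - hr) ^ 2 * (g * (h + hr) / (2 * h * hr)) := by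
          rw [mul_pow, hr2]
        have e2 : (2 * t - 2 * s) ^ 2 = 4 * (g * h) - 8 * (g * u) + 4 * (g * hr) := by
          have h3 : (2 * t - 2 * s) ^ 2 = 4 * t ^ 2 - 8 * (t * s) + 4 * s ^ 2 := by ring
          rw [h3, ht2, hs2, hts_mul]
        rw [e1, e2, show (h - hr) ^ 2 * (g * (h + hr) / (2 * h * hr)) =
          (h - hr) ^ 2 * (g * (h + hr)) / (2 * h * hr) by ring,
          le_div_iff₀ (by positivity : (0:ℝ) < 2 * h * hr)]
        have key : (h - hr) ^ 2 * (g * (h + hr)) -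
            (4 * (g * h) - 8 * (g * u) + 4 * (g * hr)) * (2 * h * hr) =
            g * ((h + hr - 2 * u) ^ 2 * (h + hr + 4 * u)) := by
          linear_combination (g * (12 * (h + hr) - 16 * u)) * hu2
        have hnn : 0 ≤ g * ((h + hr - 2 * u) ^ 2 * (h + hr + 4 * u)) :=
          mul_nonneg hg.le (mul_nonneg (sq_nonneg _) (by positivity))
        linarith only [key, hnn]
      have hshock : 2 * t - 2 * s ≤ (h - hr) * r := by
        have h1 : 0 ≤ (h - hr) * r := mul_nonneg (by linarith) hr_nonneg
        calc 2 * t - 2 * s ≤ |2 * t - 2 * s| := le_abs_self _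
          _ = Real.sqrt ((2 * t - 2 * s) ^ 2) := (Real.sqrt_sq_eq_abs _).symm
          _ ≤ Real.sqrt (((h - hr) * r) ^ 2) := Real.sqrt_le_sqrt hsq
          _ = (h - hr) * r := Real.sqrt_sq h1
      have hphir : phir g hr vr h = vr + (h - hr) * r := by
        unfold phir
        rw [if_neg (not_le.mpr hle), ← hr_def]
      unfold phirTilde
      rw [hphir]
      have hcc : 2 * t - c = vr + (2 * t - 2 * s) := by rw [hc_def]; ring
      have hge : h * (vr + (h - hr) * r) ≥ h * (2 * t - c) := by
        apply mul_le_mul_of_nonneg_left _ hh.le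
        rw [hcc]
        linarith
      exact lt_of_lt_of_le (main htne) hge
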